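/- arXiv:1012.1086 — 2 statements merged into one kernel-verified Lean document; each statement's English description precedes it below -/
import Mathlib

section
/- For every real n×p matrix X, the squared ℓ2→ℓ1 operator norm of X equals the ℓ∞→ℓ1 operator norm of X Xᵀ; that is, ‖X‖_{2→1}² = ‖X Xᵀ‖_{∞→1}. -/
open Matrix
open scoped BigOperators

/-- The ℓ1 norm of a vector: sum of absolute values of the entries. -/
def l1norm {n : ℕ} (v : Fin n → ℝ) : ℝ := ∑ i, |v i|

/-- The Euclidean (ℓ2) norm of a vector. -/
noncomputable def l2norm {p : ℕ} (u : Fin p → ℝ) : ℝ := Real.sqrt (∑ j, u j ^ 2)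

/-- The ℓ2 → ℓ1 operator norm of a matrix. -/
noncomputable def norm2to1 {n p : ℕ} (X : Matrix (Fin n) (Fin p) ℝ) : ℝ :=
  sSup {t : ℝ | ∃ u : Fin p → ℝ, l2norm u ≤ 1 ∧ t = l1norm (X.mulVec u)}

/-- The ℓ∞ → ℓ1 operator norm of a matrix. -/
noncomputable def normInfto1 {n m : ℕ} (A : Matrix (Fin n) (Fin m) ℝ) : ℝ :=
  sSup {t : ℝ | ∃ u : Fin m → ℝ, (∀ j, |u j| ≤ 1) ∧ t = l1norm (A.mulVec u)}

private lemma dot_swap {n p : ℕ} (X : Matrix (Fin n) (Fin p) ℝ) (s : Fin n → ℝ)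
    (u : Fin p → ℝ) :
    ∑ i, s i * (X.mulVec u) i = ∑ j, (Xᵀ.mulVec s) j * u j := by
  simp only [mulVec, dotProduct, transpose_apply, Finset.mul_sum, Finset.sum_mul]
  rw [Finset.sum_comm]
  exact Finset.sum_congr rfl fun j _ => Finset.sum_congr rfl fun i _ => by ring

/-- sign vector achieving the ℓ1 norm -/
private lemma sign_exists {n : ℕ} (y : Fin n → ℝ) :
    ∃ s : Fin n → ℝ, (∀ i, |s i| ≤ 1) ∧ ∑ i, |y i| = ∑ i, s i * y i := by
  refine ⟨fun i => if y i < 0 then -1 else 1, fun i => by dsimp; split <;> simp, ?_⟩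
  refine Finset.sum_congr rfl fun i _ => ?_
  dsimp only
  split
  · rw [abs_of_neg (by assumption)]; ring
  · rw [abs_of_nonneg (not_lt.mp (by assumption))]; ring

private lemma sum_mul_le_l1 {n : ℕ} (s y : Fin n → ℝ) (hs : ∀ i, |s i| ≤ 1) :
    ∑ i, s i * y i ≤ ∑ i, |y i| := by
  refine Finset.sum_le_sum fun i _ => ?_
  calc s i * y i ≤ |s i * y i| := le_abs_self _
    _ = |s i| * |y i| := abs_mul _ _
    _ ≤ 1 * |y i| := by gcongr; exact hs i
    _ = |y i| := one_mul _

theorem norm2to1_sq_eq_normInfto1 {n p : ℕ} (X : Matrix (Fin n) (Fin p) ℝ) :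
    norm2to1 X ^ 2 = normInfto1 (X * Xᵀ) := by
  classical
  set f : (Fin n → ℝ) → ℝ := fun s => ∑ j, (Xᵀ.mulVec s j) ^ 2 with hf
  set K : Set (Fin n → ℝ) := {s | ∀ i, |s i| ≤ 1} with hKdef
  have hK : IsCompact K := by
    have : K = Set.univ.pi (fun _ => Set.Icc (-1:ℝ) 1) := by
      ext s; simp [hKdef, abs_le, Set.mem_univ_pi, forall_and, Pi.le_def]
    rw [this]; exact isCompact_univ_pi (fun _ => isCompact_Icc)
  have hKne : K.Nonempty := ⟨0, fun i => by simp⟩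
  have hcont : ContinuousOn f K := by
    apply Continuous.continuousOn
    simp only [hf, mulVec, dotProduct]
    fun_prop
  obtain ⟨s₀, hs₀K, hmax⟩ := hK.exists_isMaxOn hKne hcont
  set M : ℝ := f s₀ with hM
  have hM0 : 0 ≤ M := Finset.sum_nonneg fun j _ => sq_nonneg _
  have hfle : ∀ s ∈ K, f s ≤ M := fun s hs => hmax hs
  -- key bound: for s ∈ K and any u, ∑ (Xᵀs)_j * u_j ≤ √M * l2norm u
  have key : ∀ s ∈ K, ∀ u : Fin p → ℝ,
      ∑ j, (Xᵀ.mulVec s) j * u j ≤ Real.sqrt M * l2norm u := by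
    intro s hs u
    calc ∑ j, (Xᵀ.mulVec s) j * u j
        ≤ Real.sqrt (∑ j, (Xᵀ.mulVec s) j ^ 2) * Real.sqrt (∑ j, u j ^ 2) :=
          Real.sum_mul_le_sqrt_mul_sqrt _ _ _
      _ ≤ Real.sqrt M * l2norm u := by
          unfold l2norm
          gcongr
          exact hfle s hs
  -- Claim A: norm2to1 X = √M
  have hSne : {t : ℝ | ∃ u : Fin p → ℝ, l2norm u ≤ 1 ∧ t = l1norm (X.mulVec u)}.Nonempty := by
    refine ⟨l1norm (X.mulVec 0), 0, ?_, rfl⟩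
    unfold l2norm; simp
  have hSub : ∀ t ∈ {t : ℝ | ∃ u : Fin p → ℝ, l2norm u ≤ 1 ∧ t = l1norm (X.mulVec u)},
      t ≤ Real.sqrt M := by
    rintro t ⟨u, hu, rfl⟩
    obtain ⟨s, hs, hsy⟩ := sign_exists (X.mulVec u)
    calc l1norm (X.mulVec u) = ∑ i, s i * (X.mulVec u) i := hsy
      _ = ∑ j, (Xᵀ.mulVec s) j * u j := dot_swap X s u
      _ ≤ Real.sqrt M * l2norm u := key s hs u
      _ ≤ Real.sqrt M * 1 := mul_le_mul_of_nonneg_left hu (Real.sqrt_nonneg _)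
      _ = Real.sqrt M := mul_one _
  have hSbdd : BddAbove {t : ℝ | ∃ u : Fin p → ℝ, l2norm u ≤ 1 ∧ t = l1norm (X.mulVec u)} :=
    ⟨Real.sqrt M, hSub⟩
  have hA : norm2to1 X = Real.sqrt M := by
    apply le_antisymm (csSup_le hSne hSub)
    by_cases hMz : M = 0
    · simp only [hMz, Real.sqrt_zero]
      obtain ⟨t, ht⟩ := hSne
      refine le_trans ?_ (le_csSup hSbdd ht)
      obtain ⟨u, hu, rfl⟩ := ht
      exact Finset.sum_nonneg fun i _ => abs_nonneg _
    · have hMpos : 0 < M := lt_of_le_of_ne hM0 (Ne.symm hMz)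
      have hc : 0 < Real.sqrt M := Real.sqrt_pos.mpr hMpos
      set u : Fin p → ℝ := fun j => (Xᵀ.mulVec s₀) j / Real.sqrt M with hu
      have hl2 : l2norm u = 1 := by
        unfold l2norm
        have : ∑ j, u j ^ 2 = M / M := by
          simp only [hu, div_pow, Real.sq_sqrt hM0, ← Finset.sum_div]
          rfl
        rw [this, div_self hMz, Real.sqrt_one]
      have hmem : l1norm (X.mulVec u) ∈
          {t : ℝ | ∃ u : Fin p → ℝ, l2norm u ≤ 1 ∧ t = l1norm (X.mulVec u)} :=
        ⟨u, le_of_eq hl2, rfl⟩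
      refine le_trans ?_ (le_csSup hSbdd hmem)
      have hsum : ∑ j, (Xᵀ.mulVec s₀) j * u j = M / Real.sqrt M := by
        rw [eq_div_iff hc.ne', Finset.sum_mul]
        show _ = ∑ j, (Xᵀ.mulVec s₀) j ^ 2
        refine Finset.sum_congr rfl fun j _ => ?_
        simp only [hu]
        rw [mul_assoc, div_mul_cancel₀ _ hc.ne', pow_two]
      calc Real.sqrt M = M / Real.sqrt M := by
            rw [eq_div_iff hc.ne', Real.mul_self_sqrt hM0]
        _ = ∑ j, (Xᵀ.mulVec s₀) j * u j := hsum.symm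
        _ = ∑ i, s₀ i * (X.mulVec u) i := (dot_swap X s₀ u).symm
        _ ≤ ∑ i, |(X.mulVec u) i| := sum_mul_le_l1 s₀ _ hs₀K
        _ = l1norm (X.mulVec u) := rfl
  -- Claim B: normInfto1 (X * Xᵀ) = M
  have hmv : ∀ v : Fin n → ℝ, (X * Xᵀ).mulVec v = X.mulVec (Xᵀ.mulVec v) :=
    fun v => (mulVec_mulVec v X Xᵀ).symm
  have hTub : ∀ t ∈ {t : ℝ | ∃ v : Fin n → ℝ, (∀ j, |v j| ≤ 1) ∧
      t = l1norm ((X * Xᵀ).mulVec v)}, t ≤ M := by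
    rintro t ⟨v, hv, rfl⟩
    obtain ⟨s, hs, hsy⟩ := sign_exists ((X * Xᵀ).mulVec v)
    have h1 : l1norm ((X * Xᵀ).mulVec v) = ∑ j, (Xᵀ.mulVec s) j * (Xᵀ.mulVec v) j := by
      rw [l1norm, hsy, hmv, dot_swap]
    rw [h1]
    calc ∑ j, (Xᵀ.mulVec s) j * (Xᵀ.mulVec v) j
        ≤ Real.sqrt (f s) * Real.sqrt (f v) := Real.sum_mul_le_sqrt_mul_sqrt _ _ _
      _ ≤ Real.sqrt M * Real.sqrt M := by
          gcongr <;> [exact hfle s hs; exact hfle v hv]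
      _ = M := Real.mul_self_sqrt hM0
  have hTne : {t : ℝ | ∃ v : Fin n → ℝ, (∀ j, |v j| ≤ 1) ∧
      t = l1norm ((X * Xᵀ).mulVec v)}.Nonempty :=
    ⟨l1norm ((X * Xᵀ).mulVec 0), 0, fun j => by simp, rfl⟩
  have hB : normInfto1 (X * Xᵀ) = M := by
    apply le_antisymm (csSup_le hTne hTub)
    have hmem : l1norm ((X * Xᵀ).mulVec s₀) ∈ {t : ℝ | ∃ v : Fin n → ℝ, (∀ j, |v j| ≤ 1) ∧
        t = l1norm ((X * Xᵀ).mulVec v)} := ⟨s₀, hs₀K, rfl⟩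
    refine le_trans ?_ (le_csSup ⟨M, hTub⟩ hmem)
    calc M = ∑ j, (Xᵀ.mulVec s₀) j ^ 2 := rfl
      _ = ∑ j, (Xᵀ.mulVec s₀) j * (Xᵀ.mulVec s₀) j := by
          exact Finset.sum_congr rfl fun j _ => pow_two _
      _ = ∑ i, s₀ i * (X.mulVec (Xᵀ.mulVec s₀)) i := (dot_swap X s₀ _).symm
      _ ≤ ∑ i, |(X.mulVec (Xᵀ.mulVec s₀)) i| := sum_mul_le_l1 s₀ _ hs₀K
      _ = l1norm ((X * Xᵀ).mulVec s₀) := by rw [l1norm, hmv]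
  rw [hA, hB, Real.sq_sqrt hM0]
end

section
/- (Low leverage of the LLD solution.) Let X be a real n×p matrix and γ > 0, and suppose (P⋆, C⋆) is an optimal point of the low-leverage decomposition (LLD) program for X with parameter γ. Then every diagonal entry of the hat matrix H = P⋆ (P⋆ᵀ P⋆)† P⋆ᵀ—the matrix of the orthogonal projection of ℝⁿ onto the column space of P⋆—is at most γ²; equivalently, for every standard basis vector eᵢ of ℝⁿ, the squared Euclidean norm of the orthogonal projection of eᵢ onto the column space of P⋆ is at most γ². -/
open Matrix
open scoped BigOperators

/-- The trace inner product ⟨A, B⟩ = trace(Aᵀ B) on real matrices. -/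
def tinner {n p : ℕ} (A B : Matrix (Fin n) (Fin p) ℝ) : ℝ := ∑ i, ∑ j, A i j * B i j

/-- The spectral norm (ℓ2 → ℓ2 operator norm) of a matrix. -/
noncomputable def norm2to2 {n p : ℕ} (Q : Matrix (Fin n) (Fin p) ℝ) : ℝ :=
  sSup {t : ℝ | ∃ u : Fin p → ℝ, l2norm u ≤ 1 ∧ t = l2norm (Q.mulVec u)}

/-- The nuclear norm, defined as the dual of the spectral norm with respect to
the trace inner product. -/
noncomputable def nuclearNorm {n p : ℕ} (P : Matrix (Fin n) (Fin p) ℝ) : ℝ :=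
  sSup {t : ℝ | ∃ A : Matrix (Fin n) (Fin p) ℝ, norm2to2 A ≤ 1 ∧ t = tinner P A}

/-- The row-sum norm ‖C‖_{2,1}: the sum of the Euclidean norms of the rows. -/
noncomputable def rowSumNorm {n p : ℕ} (C : Matrix (Fin n) (Fin p) ℝ) : ℝ :=
  ∑ i, l2norm (C i)

/-- The column space of a matrix, as a subspace of Euclidean space. -/
def colSpace {n p : ℕ} (P : Matrix (Fin n) (Fin p) ℝ) :
    Submodule ℝ (EuclideanSpace ℝ (Fin n)) :=
  Submodule.span ℝ {v : EuclideanSpace ℝ (Fin n) | ∃ j, v = fun i => P i j}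

section Helpers
variable {n p m q : ℕ}

lemma dot_self_nonneg' (x : Fin m → ℝ) : 0 ≤ x ⬝ᵥ x :=
  Finset.sum_nonneg fun j _ => mul_self_nonneg _

lemma l2norm_nonneg (u : Fin m → ℝ) : 0 ≤ l2norm u := Real.sqrt_nonneg _

lemma l2norm_eq_sqrt_dot (u : Fin m → ℝ) : l2norm u = Real.sqrt (u ⬝ᵥ u) := by
  simp [l2norm, dotProduct, sq]

lemma l2norm_sq (u : Fin m → ℝ) : l2norm u ^ 2 = u ⬝ᵥ u := by
  rw [l2norm_eq_sqrt_dot, Real.sq_sqrt (dot_self_nonneg' u)]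

lemma l2norm_eq_norm (x : EuclideanSpace ℝ (Fin m)) : l2norm x = ‖x‖ := by
  rw [EuclideanSpace.norm_eq]; simp [l2norm, sq_abs]

lemma inner_eq_dot (x y : EuclideanSpace ℝ (Fin m)) : (inner ℝ x y : ℝ) = (x : Fin m → ℝ) ⬝ᵥ y := by
  simp [PiLp.inner_apply, dotProduct, RCLike.inner_apply, mul_comm]

lemma dot_le_l2 (x y : Fin m → ℝ) : x ⬝ᵥ y ≤ l2norm x * l2norm y := by
  set X : EuclideanSpace ℝ (Fin m) := WithLp.toLp 2 x with hX
  set Y : EuclideanSpace ℝ (Fin m) := WithLp.toLp 2 y with hY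
  calc x ⬝ᵥ y = (inner ℝ X Y : ℝ) := (inner_eq_dot X Y).symm
    _ ≤ ‖X‖ * ‖Y‖ := real_inner_le_norm X Y
    _ = l2norm x * l2norm y := by rw [← l2norm_eq_norm, ← l2norm_eq_norm]

lemma abs_dot_le (x y : Fin m → ℝ) : |x ⬝ᵥ y| ≤ l2norm x * l2norm y := by
  set X : EuclideanSpace ℝ (Fin m) := WithLp.toLp 2 x with hX
  set Y : EuclideanSpace ℝ (Fin m) := WithLp.toLp 2 y with hY
  calc |x ⬝ᵥ y| = |(inner ℝ X Y : ℝ)| := by rw [inner_eq_dot]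
    _ ≤ ‖X‖ * ‖Y‖ := abs_real_inner_le_norm X Y
    _ = l2norm x * l2norm y := by rw [← l2norm_eq_norm, ← l2norm_eq_norm]

lemma l2norm_add_le (x y : Fin m → ℝ) : l2norm (x + y) ≤ l2norm x + l2norm y := by
  set X : EuclideanSpace ℝ (Fin m) := WithLp.toLp 2 x with hX
  set Y : EuclideanSpace ℝ (Fin m) := WithLp.toLp 2 y with hY
  calc l2norm (x + y) = ‖X + Y‖ := l2norm_eq_norm (X + Y)
    _ ≤ ‖X‖ + ‖Y‖ := norm_add_le X Y
    _ = l2norm x + l2norm y := by rw [← l2norm_eq_norm, ← l2norm_eq_norm]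

lemma l2norm_smul (a : ℝ) (x : Fin m → ℝ) : l2norm (a • x) = |a| * l2norm x := by
  simp only [l2norm, Pi.smul_apply, smul_eq_mul, mul_pow, ← Finset.mul_sum]
  rw [Real.sqrt_mul (sq_nonneg a), Real.sqrt_sq_eq_abs]

lemma abs_apply_le_l2norm (u : Fin m → ℝ) (j : Fin m) : |u j| ≤ l2norm u := by
  rw [l2norm, ← Real.sqrt_sq_eq_abs]
  exact Real.sqrt_le_sqrt (Finset.single_le_sum (f := fun j => u j ^ 2)
    (fun j _ => sq_nonneg _) (Finset.mem_univ j))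

lemma l2norm_le_sum_abs (u : Fin m → ℝ) : l2norm u ≤ ∑ j, |u j| := by
  rw [l2norm]
  have h : ∑ j, u j ^ 2 ≤ (∑ j, |u j|) ^ 2 := by
    calc ∑ j, u j ^ 2 = ∑ j, |u j| ^ 2 := by simp [sq_abs]
      _ ≤ (∑ j, |u j|) ^ 2 := Finset.sum_sq_le_sq_sum_of_nonneg fun j _ => abs_nonneg _
  calc Real.sqrt (∑ j, u j ^ 2) ≤ Real.sqrt ((∑ j, |u j|) ^ 2) := Real.sqrt_le_sqrt h
    _ = ∑ j, |u j| := Real.sqrt_sq (Finset.sum_nonneg fun j _ => abs_nonneg _)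

end Helpers

section Norms
variable {n p m q : ℕ}

lemma norm2to2_set_bddAbove (Q : Matrix (Fin n) (Fin p) ℝ) :
    BddAbove {t : ℝ | ∃ u : Fin p → ℝ, l2norm u ≤ 1 ∧ t = l2norm (Q.mulVec u)} := by
  refine ⟨∑ a, l2norm (Q a), ?_⟩
  rintro t ⟨u, hu, rfl⟩
  calc l2norm (Q *ᵥ u) ≤ ∑ a, |(Q *ᵥ u) a| := l2norm_le_sum_abs _
    _ ≤ ∑ a, l2norm (Q a) := Finset.sum_le_sum fun a _ => by
        calc |(Q *ᵥ u) a| = |Q a ⬝ᵥ u| := rfl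
          _ ≤ l2norm (Q a) * l2norm u := abs_dot_le _ _
          _ ≤ l2norm (Q a) * 1 := by
              exact mul_le_mul_of_nonneg_left hu (l2norm_nonneg _)
          _ = l2norm (Q a) := mul_one _

lemma mulVec_l2_le {Q : Matrix (Fin n) (Fin p) ℝ} (hQ : norm2to2 Q ≤ 1)
    {u : Fin p → ℝ} (hu : l2norm u ≤ 1) : l2norm (Q *ᵥ u) ≤ 1 :=
  le_trans (le_csSup (norm2to2_set_bddAbove Q) ⟨u, hu, rfl⟩) hQ

lemma norm2to2_le_one {Q : Matrix (Fin n) (Fin p) ℝ}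
    (h : ∀ u : Fin p → ℝ, l2norm u ≤ 1 → l2norm (Q *ᵥ u) ≤ 1) : norm2to2 Q ≤ 1 := by
  refine csSup_le ⟨l2norm (Q *ᵥ 0), ⟨0, by simp [l2norm], rfl⟩⟩ ?_
  rintro t ⟨u, hu, rfl⟩; exact h u hu

lemma norm2to2_zero_le : norm2to2 (0 : Matrix (Fin n) (Fin p) ℝ) ≤ 1 :=
  norm2to2_le_one fun u _ => by simp [l2norm, Matrix.zero_mulVec]

lemma row_l2_le_one {Q : Matrix (Fin n) (Fin p) ℝ} (hQ : norm2to2 Q ≤ 1) (a : Fin n) :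
    l2norm (Q a) ≤ 1 := by
  rcases eq_or_lt_of_le (l2norm_nonneg (Q a)) with h0 | h0
  · rw [← h0]; exact zero_le_one
  · set u := (l2norm (Q a))⁻¹ • (Q a) with hud
    have hu : l2norm u ≤ 1 := by
      rw [hud, l2norm_smul, abs_of_pos (inv_pos.mpr h0), inv_mul_cancel₀ (ne_of_gt h0)]
    have h2 := mulVec_l2_le hQ hu
    have h3 : (Q *ᵥ u) a = l2norm (Q a) := by
      have : (Q *ᵥ u) a = Q a ⬝ᵥ u := rfl
      rw [this, hud, dotProduct_smul, smul_eq_mul, ← l2norm_sq]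
      field_simp
    have h4 := abs_apply_le_l2norm (Q *ᵥ u) a
    rw [h3, abs_of_pos h0] at h4
    linarith

lemma tinner_eq_sum_dot (A B : Matrix (Fin n) (Fin p) ℝ) : tinner A B = ∑ a, A a ⬝ᵥ B a := rfl

lemma nuclear_set_bddAbove (P : Matrix (Fin n) (Fin p) ℝ) :
    BddAbove {t : ℝ | ∃ A : Matrix (Fin n) (Fin p) ℝ, norm2to2 A ≤ 1 ∧ t = tinner P A} := by
  refine ⟨rowSumNorm P, ?_⟩
  rintro t ⟨A, hA, rfl⟩
  rw [tinner_eq_sum_dot, rowSumNorm]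
  refine Finset.sum_le_sum fun a _ => ?_
  calc P a ⬝ᵥ A a ≤ l2norm (P a) * l2norm (A a) := dot_le_l2 _ _
    _ ≤ l2norm (P a) * 1 := mul_le_mul_of_nonneg_left (row_l2_le_one hA a) (l2norm_nonneg _)
    _ = l2norm (P a) := mul_one _

lemma tinner_le_nuclearNorm {P A : Matrix (Fin n) (Fin p) ℝ} (hA : norm2to2 A ≤ 1) :
    tinner P A ≤ nuclearNorm P :=
  le_csSup (nuclear_set_bddAbove P) ⟨A, hA, rfl⟩

lemma nuclearNorm_le {P : Matrix (Fin n) (Fin p) ℝ} {B : ℝ}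
    (h : ∀ A : Matrix (Fin n) (Fin p) ℝ, norm2to2 A ≤ 1 → tinner P A ≤ B) :
    nuclearNorm P ≤ B :=
  csSup_le ⟨tinner P 0, ⟨0, norm2to2_zero_le, rfl⟩⟩ (by rintro t ⟨A, hA, rfl⟩; exact h A hA)

end Norms

section Sums
variable {n p m q : ℕ}

-- tinner of an outer-product sum against a matrix
lemma tinner_sum_outer (f : Fin m → Fin n → ℝ) (g : Fin m → Fin p → ℝ)
    (T : Matrix (Fin n) (Fin p) ℝ) :
    tinner (fun a b => ∑ k, f k a * g k b) T = ∑ k, f k ⬝ᵥ (T *ᵥ g k) := by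
  calc tinner (fun a b => ∑ k, f k a * g k b) T
      = ∑ a, ∑ b, ∑ k, f k a * g k b * T a b := by
        refine Finset.sum_congr rfl fun a _ => Finset.sum_congr rfl fun b _ => ?_
        rw [Finset.sum_mul]
    _ = ∑ a, ∑ k, ∑ b, f k a * g k b * T a b :=
        Finset.sum_congr rfl fun a _ => Finset.sum_comm
    _ = ∑ k, ∑ a, ∑ b, f k a * g k b * T a b := Finset.sum_comm
    _ = ∑ k, f k ⬝ᵥ (T *ᵥ g k) := by
        refine Finset.sum_congr rfl fun k _ => ?_
        simp only [dotProduct, mulVec, Finset.mul_sum]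
        exact Finset.sum_congr rfl fun a _ => Finset.sum_congr rfl fun b _ => by ring

-- dot product with a function given as a sum
lemma dot_sum_right (x : Fin n → ℝ) (f : Fin m → Fin n → ℝ) (t : Fin m → ℝ) :
    (x ⬝ᵥ fun a => ∑ k, f k a * t k) = ∑ k, (x ⬝ᵥ f k) * t k := by
  calc (x ⬝ᵥ fun a => ∑ k, f k a * t k) = ∑ a, ∑ k, x a * (f k a * t k) := by
        simp only [dotProduct, Finset.mul_sum]
    _ = ∑ k, ∑ a, x a * (f k a * t k) := Finset.sum_comm
    _ = ∑ k, (x ⬝ᵥ f k) * t k := by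
        refine Finset.sum_congr rfl fun k _ => ?_
        simp only [dotProduct, Finset.sum_mul]
        exact Finset.sum_congr rfl fun a _ => by ring

lemma sum_dot_left (x : Fin n → ℝ) (f : Fin m → Fin n → ℝ) (t : Fin m → ℝ) :
    ((fun a => ∑ k, f k a * t k) ⬝ᵥ x) = ∑ k, (f k ⬝ᵥ x) * t k := by
  calc ((fun a => ∑ k, f k a * t k) ⬝ᵥ x) = ∑ a, ∑ k, f k a * t k * x a := by
        simp only [dotProduct, Finset.sum_mul]
    _ = ∑ k, ∑ a, f k a * t k * x a := Finset.sum_comm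
    _ = ∑ k, (f k ⬝ᵥ x) * t k := by
        refine Finset.sum_congr rfl fun k _ => ?_
        simp only [dotProduct, Finset.sum_mul]
        exact Finset.sum_congr rfl fun a _ => by ring

-- scalar sqrt estimate
lemma sqrt_bound {σ c ε : ℝ} (hσ : 0 < σ) (hε : 0 < ε) (hεσ : ε ≤ σ) (hc : c ^ 2 ≤ 1) :
    Real.sqrt (σ ^ 2 - 2 * ε * σ * c ^ 2 + ε ^ 2 * c ^ 2)
      ≤ σ - ε * c ^ 2 + ε ^ 2 * c ^ 2 / (2 * σ) := by
  have hK : 2 * σ * (ε ^ 2 * c ^ 2 / (2 * σ)) = ε ^ 2 * c ^ 2 := by field_simp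
  have hKnn : 0 ≤ ε ^ 2 * c ^ 2 / (2 * σ) := by positivity
  have hrhs : 0 ≤ σ - ε * c ^ 2 + ε ^ 2 * c ^ 2 / (2 * σ) := by nlinarith
  have hX : σ ^ 2 - 2 * ε * σ * c ^ 2 + ε ^ 2 * c ^ 2
      ≤ (σ - ε * c ^ 2 + ε ^ 2 * c ^ 2 / (2 * σ)) ^ 2 := by
    nlinarith [sq_nonneg (ε * c ^ 2 - ε ^ 2 * c ^ 2 / (2 * σ))]
  calc Real.sqrt (σ ^ 2 - 2 * ε * σ * c ^ 2 + ε ^ 2 * c ^ 2)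
      ≤ Real.sqrt ((σ - ε * c ^ 2 + ε ^ 2 * c ^ 2 / (2 * σ)) ^ 2) := Real.sqrt_le_sqrt hX
    _ = _ := Real.sqrt_sq hrhs

-- sums of EuclideanSpace elements apply pointwise
lemma euclid_sum_apply (s : Finset (Fin m)) (x : Fin m → EuclideanSpace ℝ (Fin n)) (a : Fin n) :
    (∑ k ∈ s, x k) a = ∑ k ∈ s, x k a := by
  induction s using Finset.cons_induction with
  | empty => rfl
  | cons j s hj ih => rw [Finset.sum_cons, Finset.sum_cons, ← ih]; rfl

-- membership of mulVec in column space
lemma mulVec_mem_colSpace (P : Matrix (Fin n) (Fin p) ℝ) (x : Fin p → ℝ) :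
    (WithLp.toLp 2 (P *ᵥ x : Fin n → ℝ) : EuclideanSpace ℝ (Fin n)) ∈ colSpace P := by
  have h : (WithLp.toLp 2 (P *ᵥ x : Fin n → ℝ) : EuclideanSpace ℝ (Fin n))
      = ∑ j, x j • (WithLp.toLp 2 (fun a => P a j) : EuclideanSpace ℝ (Fin n)) := by
    ext a
    simp [mulVec, dotProduct, Finset.sum_apply, mul_comm]
  rw [h]
  exact Submodule.sum_mem _ fun j _ =>
    Submodule.smul_mem _ _ (Submodule.subset_span ⟨j, rfl⟩)
end Sums

section Spectral
variable {n p : ℕ}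

/-- Spectral data for `Pᵀ * P`: an orthonormal, complete family of eigenvectors. -/
lemma exists_spectral (P : Matrix (Fin n) (Fin p) ℝ) :
    ∃ (v : Fin p → Fin p → ℝ) (lam : Fin p → ℝ),
      (∀ k l, v k ⬝ᵥ v l = if k = l then (1:ℝ) else 0) ∧
      (∀ a b, (∑ k, v k a * v k b) = if a = b then (1:ℝ) else 0) ∧
      (∀ k, (Pᵀ * P) *ᵥ v k = lam k • v k) := by
  have hH : (Pᴴ * P).IsHermitian := isHermitian_conjTranspose_mul_self P
  have hPT : Pᴴ = Pᵀ := by ext a b; simp [conjTranspose_apply]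
  refine ⟨fun k => ⇑(hH.eigenvectorBasis k), hH.eigenvalues, ?_, ?_, ?_⟩
  · intro k l
    have h := mem_unitaryGroup_iff'.mp (hH.eigenvectorUnitary).2
    have h2 := congrFun (congrFun h k) l
    simp only [Matrix.mul_apply, Matrix.star_apply, star_trivial,
      IsHermitian.eigenvectorUnitary_apply, Matrix.one_apply] at h2
    simpa [dotProduct] using h2
  · intro a b
    have h := mem_unitaryGroup_iff.mp (hH.eigenvectorUnitary).2
    have h2 := congrFun (congrFun h a) b
    simp only [Matrix.mul_apply, Matrix.star_apply, star_trivial,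
      IsHermitian.eigenvectorUnitary_apply, Matrix.one_apply] at h2
    simpa using h2
  · intro k
    rw [← hPT]
    exact hH.mulVec_eigenvectorBasis k

end Spectral

set_option maxHeartbeats 1000000 in
theorem lld_low_leverage {n p : ℕ} (X P C : Matrix (Fin n) (Fin p) ℝ)
    (γ : ℝ) (hγ : 0 < γ) (hPC : P + C = X)
    (hopt : ∀ P' C' : Matrix (Fin n) (Fin p) ℝ, P' + C' = X →
      nuclearNorm P + γ * rowSumNorm C ≤ nuclearNorm P' + γ * rowSumNorm C') :
    ∀ i : Fin n,
      ‖((colSpace P).orthogonalProjectionOnto (EuclideanSpace.single i 1) :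
          EuclideanSpace ℝ (Fin n))‖ ^ 2 ≤ γ ^ 2 := by
  intro i
  classical
  obtain ⟨v, lam, hortho, hcomp, hmul⟩ := exists_spectral P
  -- basic consequences
  have hPP : ∀ k l, (P *ᵥ v k) ⬝ᵥ (P *ᵥ v l) = if k = l then lam k else 0 := by
    intro k l
    have h1 : (P *ᵥ v k) ⬝ᵥ (P *ᵥ v l) = ((Pᵀ * P) *ᵥ v k) ⬝ᵥ v l := by
      rw [← Matrix.mulVec_mulVec, Matrix.mulVec_transpose, ← Matrix.dotProduct_mulVec,
        dotProduct_comm]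
    rw [h1, hmul k, smul_dotProduct, hortho k l, smul_eq_mul, mul_ite, mul_one, mul_zero]
  have hlam0 : ∀ k, 0 ≤ lam k := by
    intro k
    have h := hPP k k
    rw [if_pos rfl] at h
    rw [← h]; exact dot_self_nonneg' _
  have hPv0 : ∀ k, lam k = 0 → P *ᵥ v k = 0 := by
    intro k hk
    have h := hPP k k
    rw [if_pos rfl, hk] at h
    have hsum : ∑ a, ((P *ᵥ v k) a) ^ 2 = 0 := by
      rw [← h, dotProduct]; exact Finset.sum_congr rfl fun a _ => pow_two ((P *ᵥ v k) a)
    funext a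
    have := (Finset.sum_eq_zero_iff_of_nonneg (fun a _ => sq_nonneg ((P *ᵥ v k) a))).mp
      hsum a (Finset.mem_univ a)
    exact pow_eq_zero_iff (by norm_num) |>.mp this
  have hσpos : ∀ k, lam k ≠ 0 → 0 < Real.sqrt (lam k) := fun k hk =>
    Real.sqrt_pos.mpr (lt_of_le_of_ne (hlam0 k) (Ne.symm hk))
  have hσsq : ∀ k, Real.sqrt (lam k) ^ 2 = lam k := fun k => Real.sq_sqrt (hlam0 k)
  -- singular-vector data
  set c : Fin p → ℝ := fun k => if lam k = 0 then 0
    else (P *ᵥ v k) i / Real.sqrt (lam k) with hcdef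
  set u : Fin p → Fin n → ℝ := fun k => if lam k = 0 then 0
    else (Real.sqrt (lam k))⁻¹ • (P *ᵥ v k) with hudef
  have hPvu : ∀ k, P *ᵥ v k = Real.sqrt (lam k) • u k := by
    intro k; by_cases hk : lam k = 0
    · simp [hudef, hk, hPv0 k hk]
    · simp only [hudef, hk, if_neg hk, ite_false, smul_smul,
        mul_inv_cancel₀ (ne_of_gt (hσpos k hk)), one_smul]
  have hPvi : ∀ k, (P *ᵥ v k) i = Real.sqrt (lam k) * c k := by
    intro k; by_cases hk : lam k = 0
    · rw [hPv0 k hk]; simp [hcdef, hk]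
    · simp only [hcdef, if_neg hk]
      field_simp [ne_of_gt (hσpos k hk)]
  have hui : ∀ k, u k i = c k := by
    intro k; by_cases hk : lam k = 0
    · simp [hudef, hcdef, hk]
    · simp only [hudef, hcdef, if_neg hk, Pi.smul_apply, smul_eq_mul]
      field_simp [ne_of_gt (hσpos k hk)]
  have huu : ∀ k l, u k ⬝ᵥ u l = if k = l then (if lam k = 0 then 0 else 1) else 0 := by
    intro k l
    by_cases hk : lam k = 0
    · simp [hudef, hk, zero_dotProduct]
    · by_cases hl : lam l = 0
      · have : k ≠ l := fun h => hk (h ▸ hl)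
        simp [hudef, hl, this, dotProduct_zero]
      · simp only [hudef, if_neg hk, if_neg hl, smul_dotProduct,
          dotProduct_smul, hPP k l, smul_eq_mul]
        by_cases hkl : k = l
        · subst hkl
          simp only [if_pos rfl, if_neg hk]
          field_simp [ne_of_gt (hσpos k hk)]; simp [hσsq k]
        · simp [hkl]
  have huPv : ∀ k l, u k ⬝ᵥ (P *ᵥ v l) = if k = l then Real.sqrt (lam k) else 0 := by
    intro k l
    rw [hPvu l, dotProduct_smul, huu k l, smul_eq_mul]
    by_cases hkl : k = l
    · subst hkl
      by_cases hk : lam k = 0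
      · simp [hk, Real.sqrt_eq_zero', le_of_eq hk.symm]
      · simp [hk]
    · simp [hkl]
  have hck2 : ∀ k, c k ^ 2 ≤ 1 := by
    intro k; by_cases hk : lam k = 0
    · simp [hcdef, hk]
    · have h1 : ((P *ᵥ v k) i) ^ 2 ≤ (P *ᵥ v k) ⬝ᵥ (P *ᵥ v k) := by
        rw [dotProduct]
        refine le_trans (le_of_eq (pow_two ((P *ᵥ v k) i))) ?_
        exact Finset.single_le_sum (f := fun a => (P *ᵥ v k) a * (P *ᵥ v k) a)
          (fun a _ => mul_self_nonneg _) (Finset.mem_univ i)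
      rw [hPP k k, if_pos rfl] at h1
      have hlamk : 0 < lam k := lt_of_le_of_ne (hlam0 k) (Ne.symm hk)
      have h2 : c k = (P *ᵥ v k) i / Real.sqrt (lam k) := by simp [hcdef, hk]
      rw [h2, div_pow, hσsq k, div_le_one hlamk]
      exact h1
  -- entry expansion of P
  have hPentry : ∀ a b, P a b = ∑ k, (P *ᵥ v k) a * v k b := by
    intro a b
    calc P a b = ∑ j, P a j * (if j = b then 1 else 0) := by simp
      _ = ∑ j, P a j * (∑ k, v k j * v k b) := by
          refine Finset.sum_congr rfl fun j _ => ?_; rw [hcomp j b]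
      _ = ∑ j, ∑ k, P a j * (v k j * v k b) := by simp [Finset.mul_sum]
      _ = ∑ k, ∑ j, P a j * (v k j * v k b) := Finset.sum_comm
      _ = ∑ k, (P *ᵥ v k) a * v k b := by
          refine Finset.sum_congr rfl fun k _ => ?_
          simp only [mulVec, dotProduct, Finset.sum_mul]
          exact Finset.sum_congr rfl fun j _ => by ring
  -- the vector vv in row space and tau
  set vv : Fin p → ℝ := fun b => ∑ k, v k b * c k with hvvdef
  set tau : ℝ := ∑ k, c k ^ 2 with htaudef
  have htau0 : 0 ≤ tau := Finset.sum_nonneg fun k _ => sq_nonneg _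
  have hvvk : ∀ k, vv ⬝ᵥ v k = c k := by
    intro k
    rw [hvvdef]
    rw [sum_dot_left (v k) v c]
    calc ∑ l, (v l ⬝ᵥ v k) * c l = ∑ l, (if l = k then 1 else 0) * c l := by
          refine Finset.sum_congr rfl fun l _ => ?_; rw [hortho l k]
      _ = c k := by simp
  have hvvdot : vv ⬝ᵥ vv = tau := by
    conv_lhs => rw [hvvdef]
    rw [dot_sum_right vv v c]
    rw [htaudef]
    refine Finset.sum_congr rfl fun k _ => ?_
    rw [hvvk k]
    exact (pow_two _).symm
  have hl2vv : l2norm vv = Real.sqrt tau := by rw [l2norm_eq_sqrt_dot, hvvdot]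
  have hl2vk : ∀ k, l2norm (v k) = 1 := by
    intro k
    rw [l2norm_eq_sqrt_dot, hortho k k, if_pos rfl, Real.sqrt_one]
  -- the projection vector W
  set W : EuclideanSpace ℝ (Fin n) := WithLp.toLp 2 (fun a => ∑ k, u k a * c k : Fin n → ℝ) with hWdef
  have hWfun : ∀ a, W a = ∑ k, u k a * c k := fun a => rfl
  have hWmem : W ∈ colSpace P := by
    have hWsum : W = ∑ k, (c k • (WithLp.toLp 2 (u k : Fin n → ℝ) : EuclideanSpace ℝ (Fin n))) := by
      ext a
      rw [euclid_sum_apply, hWfun]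
      refine Finset.sum_congr rfl fun k _ => ?_
      simp [mul_comm]
    rw [hWsum]
    refine Submodule.sum_mem _ fun k _ => Submodule.smul_mem _ _ ?_
    by_cases hk : lam k = 0
    · have : u k = 0 := by simp [hudef, hk]
      rw [this]
      exact Submodule.zero_mem _
    · have : u k = P *ᵥ ((Real.sqrt (lam k))⁻¹ • v k) := by
        rw [Matrix.mulVec_smul]
        simp [hudef, hk]
      rw [this]
      exact mulVec_mem_colSpace P _
  have hWperp : ∀ s ∈ colSpace P,
      (inner ℝ ((EuclideanSpace.single i 1 : EuclideanSpace ℝ (Fin n)) - W) s : ℝ) = 0 := by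
    have hgen : ∀ (j : Fin p),
        (inner ℝ ((EuclideanSpace.single i 1 : EuclideanSpace ℝ (Fin n)) - W)
          (WithLp.toLp 2 (fun a => P a j : Fin n → ℝ) : EuclideanSpace ℝ (Fin n)) : ℝ) = 0 := by
      intro j
      rw [inner_eq_dot, WithLp.ofLp_toLp]
      have hsub : (((EuclideanSpace.single i 1 : EuclideanSpace ℝ (Fin n)) - W : EuclideanSpace ℝ (Fin n)) : Fin n → ℝ)
          = ((fun a => if a = i then (1:ℝ) else 0) - (fun a => W a) : Fin n → ℝ) := by
        funext a
        have h0 : ((EuclideanSpace.single i 1 : EuclideanSpace ℝ (Fin n)) - W) a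
            = (EuclideanSpace.single i 1 : EuclideanSpace ℝ (Fin n)) a - W a := rfl
        rw [h0, EuclideanSpace.single_apply]
        rfl
      rw [hsub, sub_dotProduct]
      -- first term
      have h1 : ((fun a => if a = i then (1:ℝ) else 0) ⬝ᵥ fun a => P a j) = P i j := by
        simp [dotProduct]
      -- second term
      have hcolj : (fun a => P a j : Fin n → ℝ) = fun a => ∑ k, (P *ᵥ v k) a * v k j := by
        funext a; exact hPentry a j
      have h2 : ((W : Fin n → ℝ) ⬝ᵥ fun a => P a j) = ∑ k, Real.sqrt (lam k) * v k j * c k := by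
        have hW' : (W : Fin n → ℝ) = fun a => ∑ k, u k a * c k := funext hWfun
        rw [hW', sum_dot_left (fun a => P a j) u c]
        refine Finset.sum_congr rfl fun k _ => ?_
        have : (u k ⬝ᵥ fun a => P a j) = Real.sqrt (lam k) * v k j := by
          rw [hcolj, dot_sum_right (u k) (fun l => P *ᵥ v l) (fun l => v l j)]
          calc ∑ l, (u k ⬝ᵥ (P *ᵥ v l)) * v l j
              = ∑ l, (if k = l then Real.sqrt (lam k) else 0) * v l j := by
                refine Finset.sum_congr rfl fun l _ => ?_; rw [huPv k l]
            _ = Real.sqrt (lam k) * v k j := by simp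
        rw [this]
      rw [h1, h2]
      have h3 : P i j = ∑ k, Real.sqrt (lam k) * v k j * c k := by
        rw [hPentry i j]
        refine Finset.sum_congr rfl fun k _ => ?_
        rw [hPvi k]; ring
      rw [← h3]; ring
    intro s hs
    induction hs using Submodule.span_induction with
    | mem x hx =>
        obtain ⟨j, hj⟩ := hx
        rw [show x = WithLp.toLp 2 (fun i => P i j) from by rw [← hj]]
        exact hgen j
    | zero => exact inner_zero_right _
    | add x y hx hy ihx ihy => rw [inner_add_right, ihx, ihy]; ring
    | smul t x hx ih => rw [inner_smul_right, ih]; ring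
  have hproj : (((colSpace P).orthogonalProjectionOnto (EuclideanSpace.single i 1) :
      EuclideanSpace ℝ (Fin n))) = W := by
    rw [← Submodule.starProjection_apply]
    exact Submodule.eq_starProjection_of_mem_of_inner_eq_zero hWmem hWperp
  -- norm of W
  have hWdot : ((fun a => ∑ k, u k a * c k : Fin n → ℝ)) ⬝ᵥ (fun a => ∑ k, u k a * c k) = tau := by
    rw [sum_dot_left (fun a => ∑ k, u k a * c k) u c]
    have huW : ∀ k, (u k ⬝ᵥ (fun a => ∑ l, u l a * c l)) = (if lam k = 0 then 0 else 1) * c k := by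
      intro k
      rw [dot_sum_right (u k) u c]
      calc ∑ l, (u k ⬝ᵥ u l) * c l
          = ∑ l, (if k = l then (if lam k = 0 then 0 else 1) else 0) * c l := by
            refine Finset.sum_congr rfl fun l _ => ?_; rw [huu k l]
        _ = (if lam k = 0 then 0 else 1) * c k := by simp
    calc ∑ k, (u k ⬝ᵥ (fun a => ∑ l, u l a * c l)) * c k
        = ∑ k, ((if lam k = 0 then 0 else 1) * c k) * c k := by
          refine Finset.sum_congr rfl fun k _ => ?_; rw [huW k]
      _ = tau := by
          rw [htaudef]; refine Finset.sum_congr rfl fun k _ => ?_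
          by_cases hk : lam k = 0
          · simp [hk, hcdef]
          · simp only [hk, ite_false, one_mul]
            exact (pow_two _).symm
  have hWnormsq : ‖W‖ ^ 2 = tau := by
    rw [← l2norm_eq_norm W, l2norm_sq]
    exact hWdot
  rw [hproj, hWnormsq]
  -- goal is now: tau ≤ γ ^ 2
  -- dual certificate lower bound for the nuclear norm of P
  set T : Matrix (Fin n) (Fin p) ℝ := fun a b => ∑ k, v k b * u k a with hTdef
  have hTmul : ∀ x : Fin p → ℝ, T *ᵥ x = fun a => ∑ k, u k a * (v k ⬝ᵥ x) := by
    intro x; funext a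
    have h0 : (T *ᵥ x) a = (fun b => ∑ k, v k b * u k a) ⬝ᵥ x := rfl
    rw [h0, sum_dot_left x v (fun k => u k a)]
    exact Finset.sum_congr rfl fun k _ => by ring
  have hparseval : ∀ x : Fin p → ℝ, ∑ k, (v k ⬝ᵥ x) ^ 2 = x ⬝ᵥ x := by
    intro x
    have hxexp : x = fun b => ∑ k, v k b * (v k ⬝ᵥ x) := by
      funext b
      calc x b = ∑ a, x a * (if a = b then 1 else 0) := by simp
        _ = ∑ a, x a * (∑ k, v k a * v k b) := by
            refine Finset.sum_congr rfl fun a _ => ?_; rw [hcomp a b]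
        _ = ∑ a, ∑ k, x a * (v k a * v k b) := by simp [Finset.mul_sum]
        _ = ∑ k, ∑ a, x a * (v k a * v k b) := Finset.sum_comm
        _ = ∑ k, v k b * (v k ⬝ᵥ x) := by
            refine Finset.sum_congr rfl fun k _ => ?_
            calc ∑ a, x a * (v k a * v k b) = ∑ a, v k b * (v k a * x a) :=
                  Finset.sum_congr rfl fun a _ => by ring
              _ = v k b * (v k ⬝ᵥ x) := by rw [dotProduct, Finset.mul_sum]
    symm
    calc x ⬝ᵥ x = ((fun b => ∑ k, v k b * (v k ⬝ᵥ x)) : Fin p → ℝ) ⬝ᵥ x := by rw [← hxexp]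
      _ = ∑ k, (v k ⬝ᵥ x) * (v k ⬝ᵥ x) := sum_dot_left x v (fun k => v k ⬝ᵥ x)
      _ = ∑ k, (v k ⬝ᵥ x) ^ 2 := Finset.sum_congr rfl fun k _ => (pow_two _).symm
  have hT1 : norm2to2 T ≤ 1 := by
    refine norm2to2_le_one fun x hx => ?_
    have hdot : (T *ᵥ x) ⬝ᵥ (T *ᵥ x) ≤ x ⬝ᵥ x := by
      rw [hTmul x]
      rw [sum_dot_left (fun a => ∑ k, u k a * (v k ⬝ᵥ x)) u (fun k => v k ⬝ᵥ x)]
      have huT : ∀ k, (u k ⬝ᵥ (fun a => ∑ l, u l a * (v l ⬝ᵥ x)))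
          = (if lam k = 0 then 0 else 1) * (v k ⬝ᵥ x) := by
        intro k
        rw [dot_sum_right (u k) u (fun l => v l ⬝ᵥ x)]
        calc ∑ l, (u k ⬝ᵥ u l) * (v l ⬝ᵥ x)
            = ∑ l, (if k = l then (if lam k = 0 then 0 else 1) else 0) * (v l ⬝ᵥ x) := by
              refine Finset.sum_congr rfl fun l _ => ?_; rw [huu k l]
          _ = (if lam k = 0 then 0 else 1) * (v k ⬝ᵥ x) := by simp
      calc ∑ k, (u k ⬝ᵥ (fun a => ∑ l, u l a * (v l ⬝ᵥ x))) * (v k ⬝ᵥ x)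
          = ∑ k, ((if lam k = 0 then 0 else 1) * (v k ⬝ᵥ x)) * (v k ⬝ᵥ x) := by
            refine Finset.sum_congr rfl fun k _ => ?_; rw [huT k]
        _ ≤ ∑ k, (v k ⬝ᵥ x) ^ 2 := by
            refine Finset.sum_le_sum fun k _ => ?_
            by_cases hk : lam k = 0
            · simp only [hk, ite_true, zero_mul]; positivity
            · simp only [hk, ite_false, one_mul]
              exact le_of_eq (pow_two _).symm
        _ = x ⬝ᵥ x := hparseval x
    rw [l2norm_eq_sqrt_dot]
    calc Real.sqrt ((T *ᵥ x) ⬝ᵥ (T *ᵥ x)) ≤ Real.sqrt (x ⬝ᵥ x) := Real.sqrt_le_sqrt hdot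
      _ = l2norm x := (l2norm_eq_sqrt_dot x).symm
      _ ≤ 1 := hx
  have hTP : tinner P T = ∑ k, Real.sqrt (lam k) := by
    have hPmat : P = fun a b => ∑ k, (P *ᵥ v k) a * v k b := by
      funext a b; exact hPentry a b
    have hTv : ∀ l, T *ᵥ v l = u l := by
      intro l; rw [hTmul (v l)]; funext a
      calc ∑ k, u k a * (v k ⬝ᵥ v l) = ∑ k, u k a * (if k = l then 1 else 0) := by
            refine Finset.sum_congr rfl fun k _ => ?_; rw [hortho k l]
        _ = u l a := by simp
    calc tinner P T = tinner (fun a b => ∑ k, (P *ᵥ v k) a * v k b) T := by rw [← hPmat]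
      _ = ∑ k, (P *ᵥ v k) ⬝ᵥ (T *ᵥ v k) := tinner_sum_outer _ _ _
      _ = ∑ k, Real.sqrt (lam k) := by
          refine Finset.sum_congr rfl fun k _ => ?_
          rw [hTv k, dotProduct_comm, huPv k k, if_pos rfl]
  have hlow : ∑ k, Real.sqrt (lam k) ≤ nuclearNorm P := by
    rw [← hTP]; exact tinner_le_nuclearNorm hT1
  -- the constant K0
  set K0 : ℝ := ∑ k, (if lam k = 0 then 0 else c k ^ 2 / (2 * Real.sqrt (lam k))) with hK0def
  have hK00 : 0 ≤ K0 := by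
    rw [hK0def]
    refine Finset.sum_nonneg fun k _ => ?_
    by_cases hk : lam k = 0
    · simp [hk]
    · simp only [hk, ite_false]
      have := hσpos k hk
      positivity
  -- key perturbation inequality
  have key : ∀ ε : ℝ, 0 < ε → (∀ k, lam k ≠ 0 → ε ≤ Real.sqrt (lam k)) →
      tau ≤ ε * K0 + γ * Real.sqrt tau := by
    intro ε hε hεb
    set g : Fin p → Fin n → ℝ :=
      fun k a => (P *ᵥ v k) a - ε * c k * (if a = i then 1 else 0) with hgdef
    set Pe : Matrix (Fin n) (Fin p) ℝ := fun a b => ∑ k, g k a * v k b with hPedef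
    set Ce : Matrix (Fin n) (Fin p) ℝ := fun a b => C a b + (P a b - Pe a b) with hCedef
    have hPeCe : Pe + Ce = X := by
      funext a b
      have h1 : (Pe + Ce) a b = Pe a b + Ce a b := rfl
      have h2 : Ce a b = C a b + (P a b - Pe a b) := by rw [hCedef]
      have h3 : (P + C) a b = P a b + C a b := rfl
      rw [h1, h2, ← hPC, h3]; ring
    have hPPe : ∀ a b, P a b - Pe a b = ε * (if a = i then 1 else 0) * vv b := by
      intro a b
      have h1 : Pe a b = ∑ k, g k a * v k b := by rw [hPedef]
      rw [h1]
      calc P a b - ∑ k, g k a * v k b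
          = ∑ k, (P *ᵥ v k) a * v k b
            - ∑ k, ((P *ᵥ v k) a - ε * c k * (if a = i then 1 else 0)) * v k b := by
            rw [← hPentry a b, hgdef]
        _ = ∑ k, ((P *ᵥ v k) a * v k b
            - ((P *ᵥ v k) a - ε * c k * (if a = i then 1 else 0)) * v k b) :=
            (Finset.sum_sub_distrib _ _).symm
        _ = ∑ k, ε * (if a = i then 1 else 0) * (v k b * c k) :=
            Finset.sum_congr rfl fun k _ => by ring
        _ = ε * (if a = i then 1 else 0) * ∑ k, v k b * c k := by rw [← Finset.mul_sum]
        _ = ε * (if a = i then 1 else 0) * vv b := rfl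
    have hCe_row : ∀ a, l2norm (Ce a) ≤ l2norm (C a)
        + (if a = i then ε * Real.sqrt tau else 0) := by
      intro a
      by_cases ha : a = i
      · subst ha
        have hCea : Ce a = C a + ε • vv := by
          funext b
          have h2 : Ce a b = C a b + (P a b - Pe a b) := by rw [hCedef]
          rw [h2, hPPe a b, if_pos rfl]
          simp [Pi.add_apply, Pi.smul_apply, smul_eq_mul]
        rw [hCea, if_pos rfl]
        calc l2norm (C a + ε • vv) ≤ l2norm (C a) + l2norm (ε • vv) := l2norm_add_le _ _
          _ = l2norm (C a) + ε * Real.sqrt tau := by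
              rw [l2norm_smul, hl2vv, abs_of_pos hε]
      · have hCea : Ce a = C a := by
          funext b
          have h2 : Ce a b = C a b + (P a b - Pe a b) := by rw [hCedef]
          rw [h2, hPPe a b, if_neg ha]
          ring
        rw [hCea, if_neg ha, add_zero]
    have hrowCe : rowSumNorm Ce ≤ rowSumNorm C + ε * Real.sqrt tau := by
      rw [rowSumNorm, rowSumNorm]
      calc ∑ a, l2norm (Ce a)
          ≤ ∑ a, (l2norm (C a) + (if a = i then ε * Real.sqrt tau else 0)) :=
            Finset.sum_le_sum fun a _ => hCe_row a
        _ = (∑ a, l2norm (C a)) + ∑ a, (if a = i then ε * Real.sqrt tau else 0) :=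
            Finset.sum_add_distrib
        _ = (∑ a, l2norm (C a)) + ε * Real.sqrt tau := by
            rw [Finset.sum_ite_eq' Finset.univ i (fun _ => ε * Real.sqrt tau),
              if_pos (Finset.mem_univ i)]
    -- bound on rows g k
    have hgbound : ∀ k, l2norm (g k) ≤ Real.sqrt (lam k) - ε * c k ^ 2
        + ε ^ 2 * (if lam k = 0 then 0 else c k ^ 2 / (2 * Real.sqrt (lam k))) := by
      intro k
      by_cases hk : lam k = 0
      · have hc0 : c k = 0 := by simp [hcdef, hk]
        have hg0 : g k = 0 := by
          funext a
          have h2 : g k a = (P *ᵥ v k) a - ε * c k * (if a = i then 1 else 0) := by rw [hgdef]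
          rw [h2, hPv0 k hk, hc0]
          simp
        rw [hg0, hk]
        simp [l2norm, hc0, Real.sqrt_zero]
      · have hgg : g k ⬝ᵥ g k = Real.sqrt (lam k) ^ 2
            - 2 * ε * Real.sqrt (lam k) * c k ^ 2 + ε ^ 2 * c k ^ 2 := by
          have hterm : ∀ a, g k a * g k a = (P *ᵥ v k) a * (P *ᵥ v k) a
              - 2 * ε * c k * ((if a = i then 1 else 0) * (P *ᵥ v k) a)
              + ε ^ 2 * c k ^ 2 * (if a = i then 1 else 0) := by
            intro a
            have h2 : g k a = (P *ᵥ v k) a - ε * c k * (if a = i then 1 else 0) := by rw [hgdef]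
            rw [h2]
            by_cases ha : a = i
            · rw [if_pos ha]; ring
            · rw [if_neg ha]; ring
          calc g k ⬝ᵥ g k = ∑ a, g k a * g k a := rfl
            _ = ∑ a, ((P *ᵥ v k) a * (P *ᵥ v k) a
                - 2 * ε * c k * ((if a = i then 1 else 0) * (P *ᵥ v k) a)
                + ε ^ 2 * c k ^ 2 * (if a = i then 1 else 0)) :=
                Finset.sum_congr rfl fun a _ => hterm a
            _ = (∑ a, (P *ᵥ v k) a * (P *ᵥ v k) a)
                - 2 * ε * c k * (∑ a, (if a = i then 1 else 0) * (P *ᵥ v k) a)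
                + ε ^ 2 * c k ^ 2 * (∑ a, (if a = i then (1:ℝ) else 0)) := by
                rw [Finset.sum_add_distrib, Finset.sum_sub_distrib, ← Finset.mul_sum,
                  ← Finset.mul_sum]
            _ = (P *ᵥ v k) ⬝ᵥ (P *ᵥ v k) - 2 * ε * c k * ((P *ᵥ v k) i) + ε ^ 2 * c k ^ 2 := by
                rw [Finset.sum_ite_eq' Finset.univ i (fun _ => (1:ℝ)),
                  if_pos (Finset.mem_univ i)]
                have : (∑ a, (if a = i then (1:ℝ) else 0) * (P *ᵥ v k) a) = (P *ᵥ v k) i := by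
                  simp
                rw [this, mul_one]
                rfl
            _ = Real.sqrt (lam k) ^ 2 - 2 * ε * Real.sqrt (lam k) * c k ^ 2
                + ε ^ 2 * c k ^ 2 := by
                rw [hPP k k, if_pos rfl, hPvi k, hσsq k]; ring
        rw [l2norm_eq_sqrt_dot, hgg, if_neg hk]
        refine le_trans (sqrt_bound (hσpos k hk) hε (hεb k hk) (hck2 k)) (le_of_eq (by ring))
    -- nuclear norm of the perturbed matrix
    have hPeup : nuclearNorm Pe ≤ ∑ k, (Real.sqrt (lam k) - ε * c k ^ 2
        + ε ^ 2 * (if lam k = 0 then 0 else c k ^ 2 / (2 * Real.sqrt (lam k)))) := by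
      refine nuclearNorm_le fun A hA => ?_
      have h1 : tinner Pe A = ∑ k, g k ⬝ᵥ (A *ᵥ v k) := by
        rw [hPedef]; exact tinner_sum_outer g v A
      rw [h1]
      refine le_trans (Finset.sum_le_sum fun k _ => ?_)
        (Finset.sum_le_sum fun k _ => hgbound k)
      calc g k ⬝ᵥ (A *ᵥ v k) ≤ l2norm (g k) * l2norm (A *ᵥ v k) := dot_le_l2 _ _
        _ ≤ l2norm (g k) * 1 :=
            mul_le_mul_of_nonneg_left (mulVec_l2_le hA (le_of_eq (hl2vk k))) (l2norm_nonneg _)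
        _ = l2norm (g k) := mul_one _
    have hsum_split : ∑ k, (Real.sqrt (lam k) - ε * c k ^ 2
        + ε ^ 2 * (if lam k = 0 then 0 else c k ^ 2 / (2 * Real.sqrt (lam k))))
        = (∑ k, Real.sqrt (lam k)) - ε * tau + ε ^ 2 * K0 := by
      rw [Finset.sum_add_distrib, Finset.sum_sub_distrib, ← Finset.mul_sum, ← Finset.mul_sum,
        htaudef, hK0def]
    have hO := hopt Pe Ce hPeCe
    have h2 : nuclearNorm P + γ * rowSumNorm C
        ≤ ((∑ k, Real.sqrt (lam k)) - ε * tau + ε ^ 2 * K0)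
          + γ * (rowSumNorm C + ε * Real.sqrt tau) := by
      refine le_trans hO (add_le_add ?_ ?_)
      · rw [← hsum_split]; exact hPeup
      · exact mul_le_mul_of_nonneg_left hrowCe hγ.le
    have h3 : ε * tau ≤ ε * (ε * K0 + γ * Real.sqrt tau) := by nlinarith [hlow, h2]
    exact le_of_mul_le_mul_left h3 hε
  -- take ε → 0
  have hfin : tau ≤ γ * Real.sqrt tau := by
    by_contra hcon
    push_neg at hcon
    have hτpos : 0 < tau := lt_of_le_of_lt (by positivity) hcon
    have hSne : ∃ k, lam k ≠ 0 := by
      by_contra hall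
      push_neg at hall
      have h0 : tau = 0 := by
        rw [htaudef]
        refine Finset.sum_eq_zero fun k _ => ?_
        simp [hcdef, hall k]
      rw [h0] at hτpos
      exact lt_irrefl 0 hτpos
    have hSne' : (Finset.univ.filter (fun k => lam k ≠ 0)).Nonempty :=
      ⟨hSne.choose, by simp [hSne.choose_spec]⟩
    set σmin := (Finset.univ.filter (fun k => lam k ≠ 0)).inf' hSne'
      (fun k => Real.sqrt (lam k)) with hσmin
    have hσminpos : 0 < σmin := by
      rw [hσmin, Finset.lt_inf'_iff]
      intro k hk
      exact hσpos k (by simpa using hk)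
    set δ := (tau - γ * Real.sqrt tau) / (K0 + 1) with hδ
    have hδpos : 0 < δ := div_pos (by linarith) (by linarith)
    set ε := min δ σmin with hεd
    have hεpos : 0 < ε := lt_min hδpos hσminpos
    have hεb : ∀ k, lam k ≠ 0 → ε ≤ Real.sqrt (lam k) := by
      intro k hk
      exact le_trans (min_le_right _ _) (Finset.inf'_le _ (by simp [hk]))
    have h := key ε hεpos hεb
    have hεK : ε * K0 ≤ δ * K0 := mul_le_mul_of_nonneg_right (min_le_left _ _) hK00
    have hδK : δ * K0 < tau - γ * Real.sqrt tau := by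
      have h1 : 0 < tau - γ * Real.sqrt tau := by linarith
      have h2 : δ * (K0 + 1) = tau - γ * Real.sqrt tau := by
        rw [hδ]; field_simp
      nlinarith [hδpos]
    linarith
  nlinarith [Real.sq_sqrt htau0, Real.sqrt_nonneg tau, sq_nonneg (Real.sqrt tau - γ),
    sq_nonneg (Real.sqrt tau + γ), hγ, hfin]
end
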